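/- Let B₀ be a building set on [n+1] and S a nonempty subset of [n+1]. Then the maximal elements of B₀ contained in S are pairwise disjoint and their union, together with the singletons of remaining elements of S, partitions S; this partition is exactly the minimal decomposition of S into elements of B₀. -/

import Mathlib

def IsBuildingSet {n : ℕ} (B : Set (Finset (Fin (n + 1)))) : Prop :=
  (∀ S ∈ B, S.Nonempty) ∧ (∀ i : Fin (n + 1), {i} ∈ B) ∧
    (∀ S₁ ∈ B, ∀ S₂ ∈ B, (S₁ ∩ S₂).Nonempty → S₁ ∪ S₂ ∈ B)

def IsDecomposition {n : ℕ} (B₀ : Set (Finset (Fin (n + 1))))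
    (S : Finset (Fin (n + 1))) (P : Finset (Finset (Fin (n + 1)))) : Prop :=
  (∀ T ∈ P, T ∈ B₀) ∧ (∀ T₁ ∈ P, ∀ T₂ ∈ P, T₁ ≠ T₂ → T₁ ∩ T₂ = ∅) ∧ P.sup id = S

/-- auxiliary: union of A with a finset of members of B₀ each meeting A stays in B₀ -/
lemma bs_union_sup {n : ℕ} {B₀ : Set (Finset (Fin (n + 1)))} (hB : IsBuildingSet B₀)
    {A : Finset (Fin (n + 1))} (hA : A ∈ B₀) :
    ∀ F : Finset (Finset (Fin (n + 1))), (∀ T ∈ F, T ∈ B₀ ∧ (T ∩ A).Nonempty) →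
      A ∪ F.sup id ∈ B₀ := by
  intro F
  induction F using Finset.induction_on with
  | empty => intro _; simpa using hA
  | @insert a F ha ih =>
    intro hF
    have h1 : A ∪ (insert a F).sup id = (A ∪ F.sup id) ∪ a := by
      rw [Finset.sup_insert]; ext x
      simp only [Finset.mem_union, Finset.sup_eq_union, id, Finset.mem_union]
      tauto
    rw [h1]
    obtain ⟨haB, hai⟩ := hF a (Finset.mem_insert_self a F)
    refine hB.2.2 _ (ih fun T hT => hF T (Finset.mem_insert_of_mem hT)) a haB ?_
    obtain ⟨x, hx⟩ := hai
    refine ⟨x, ?_⟩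
    simp only [Finset.mem_inter, Finset.mem_union] at hx ⊢
    tauto

/-- auxiliary: every member of B₀ inside S extends to a maximal one -/
lemma bs_exists_max {n : ℕ} {B₀ : Set (Finset (Fin (n + 1)))}
    {S T0 : Finset (Fin (n + 1))} (hT0 : T0 ∈ B₀) (hT0S : T0 ⊆ S) :
    ∃ T, T ∈ B₀ ∧ T ⊆ S ∧ T0 ⊆ T ∧ ∀ T' ∈ B₀, T' ⊆ S → T ⊆ T' → T = T' := by
  have hfin : {T : Finset (Fin (n + 1)) | T ∈ B₀ ∧ T ⊆ S ∧ T0 ⊆ T}.Finite := by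
    apply Set.Finite.subset (S.powerset).finite_toSet
    intro T hT
    simp only [Finset.coe_powerset, Set.mem_preimage, Set.mem_powerset_iff,
      Finset.coe_subset]
    exact hT.2.1
  obtain ⟨T, hT, hmax⟩ := Set.Finite.exists_maximalFor id _ hfin
    ⟨T0, hT0, hT0S, Finset.Subset.refl _⟩
  refine ⟨T, hT.1, hT.2.1, hT.2.2, ?_⟩
  intro T' hT' hT'S hTT'
  exact Finset.Subset.antisymm hTT' (hmax ⟨hT', hT'S, hT.2.2.trans hTT'⟩ hTT')

theorem stmt16 {n : ℕ} (B₀ : Set (Finset (Fin (n + 1)))) (h0 : IsBuildingSet B₀)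
    (S : Finset (Fin (n + 1))) (hS : S.Nonempty)
    (M : Set (Finset (Fin (n + 1))))
    (hM : M = {T | T ∈ B₀ ∧ T ⊆ S ∧ ∀ T' ∈ B₀, T' ⊆ S → T ⊆ T' → T = T'}) :
    (∀ T₁ ∈ M, ∀ T₂ ∈ M, T₁ ≠ T₂ → T₁ ∩ T₂ = ∅) ∧
    (∀ x ∈ S, ∃! T, T ∈ M ∧ x ∈ T) ∧
    ∀ Q : Finset (Finset (Fin (n + 1))),
      IsDecomposition B₀ S Q →
      (∀ Q' : Finset (Finset (Fin (n + 1))), IsDecomposition B₀ S Q' → Q.card ≤ Q'.card) →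
      ↑Q = M := by
  subst hM
  -- part 1: pairwise disjoint
  have part1 : ∀ T₁ ∈ {T | T ∈ B₀ ∧ T ⊆ S ∧ ∀ T' ∈ B₀, T' ⊆ S → T ⊆ T' → T = T'},
      ∀ T₂ ∈ {T | T ∈ B₀ ∧ T ⊆ S ∧ ∀ T' ∈ B₀, T' ⊆ S → T ⊆ T' → T = T'},
      T₁ ≠ T₂ → T₁ ∩ T₂ = ∅ := by
    intro T₁ h₁ T₂ h₂ hne
    by_contra h
    have hnonem : (T₁ ∩ T₂).Nonempty := Finset.nonempty_iff_ne_empty.mpr h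
    have hu : T₁ ∪ T₂ ∈ B₀ := h0.2.2 T₁ h₁.1 T₂ h₂.1 hnonem
    have huS : T₁ ∪ T₂ ⊆ S := Finset.union_subset h₁.2.1 h₂.2.1
    have e1 : T₁ = T₁ ∪ T₂ := h₁.2.2 _ hu huS Finset.subset_union_left
    have e2 : T₂ = T₁ ∪ T₂ := h₂.2.2 _ hu huS Finset.subset_union_right
    exact hne (e1.trans e2.symm)
  refine ⟨part1, ?_, ?_⟩
  · -- part 2: unique maximal element containing each x
    intro x hx
    obtain ⟨T, hTB, hTS, hxT, hTmax⟩ :=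
      bs_exists_max (h0.2.1 x) (Finset.singleton_subset_iff.mpr hx)
    refine ⟨T, ⟨⟨hTB, hTS, hTmax⟩, hxT (Finset.mem_singleton_self x)⟩, ?_⟩
    rintro T' ⟨hT'M, hxT'⟩
    by_contra hne
    have := part1 T' hT'M T ⟨hTB, hTS, hTmax⟩ hne
    have : x ∈ T' ∩ T := Finset.mem_inter.mpr ⟨hxT', hxT (Finset.mem_singleton_self x)⟩
    rw [‹T' ∩ T = ∅›] at this
    exact absurd this (Finset.notMem_empty x)
  · -- part 3: minimal decomposition equals M
    intro Q hQ hmin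
    obtain ⟨hQB, hQdisj, hQsup⟩ := hQ
    have hQM : ∀ T ∈ Q, T ∈ B₀ ∧ T ⊆ S ∧ ∀ T' ∈ B₀, T' ⊆ S → T ⊆ T' → T = T' := by
      intro T hTQ
      have hTS : T ⊆ S := hQsup ▸ Finset.le_sup (f := id) hTQ
      refine ⟨hQB T hTQ, hTS, ?_⟩
      intro T' hT'B hT'S hTT'
      by_contra hne
      -- merge T' with everything in Q that meets it, get a smaller decomposition
      set F : Finset (Finset (Fin (n + 1))) := Q.filter (fun U => (U ∩ T').Nonempty) with hF
      have hFQ : F ⊆ Q := Finset.filter_subset _ _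
      have hFprop : ∀ U ∈ F, U ∈ B₀ ∧ (U ∩ T').Nonempty := by
        intro U hU
        rw [hF, Finset.mem_filter] at hU
        exact ⟨hQB U hU.1, hU.2⟩
      set W : Finset (Fin (n + 1)) := T' ∪ F.sup id with hW
      have hWB : W ∈ B₀ := bs_union_sup h0 hT'B F hFprop
      have hWS : W ⊆ S := by
        rw [hW]
        refine Finset.union_subset hT'S (Finset.sup_le ?_)
        intro U hU
        exact hQsup ▸ Finset.le_sup (f := id) (hFQ hU)
      -- disjointness of W from non-F elements of Q
      have hWdisj : ∀ U ∈ Q, U ∉ F → W ∩ U = ∅ := by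
        intro U hUQ hUF
        rw [Finset.eq_empty_iff_forall_notMem]
        intro y hy
        rw [Finset.mem_inter, hW, Finset.mem_union] at hy
        obtain ⟨hy1 | hy1, hy2⟩ := hy
        · exact hUF (Finset.mem_filter.mpr ⟨hUQ, ⟨y, Finset.mem_inter.mpr ⟨hy2, hy1⟩⟩⟩)
        · rw [Finset.mem_sup] at hy1
          obtain ⟨V, hVF, hyV⟩ := hy1
          have hVU : V ≠ U := fun h => hUF (h ▸ hVF)
          have := hQdisj V (hFQ hVF) U hUQ hVU
          have : y ∈ V ∩ U := Finset.mem_inter.mpr ⟨hyV, hy2⟩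
          rw [‹V ∩ U = ∅›] at this
          exact absurd this (Finset.notMem_empty y)
      set Q' : Finset (Finset (Fin (n + 1))) := insert W (Q \ F) with hQ'
      have hQ'dec : IsDecomposition B₀ S Q' := by
        refine ⟨?_, ?_, ?_⟩
        · intro U hU
          rw [hQ', Finset.mem_insert] at hU
          rcases hU with rfl | hU
          · exact hWB
          · exact hQB U (Finset.mem_sdiff.mp hU).1
        · intro U₁ hU₁ U₂ hU₂ hne12
          rw [hQ', Finset.mem_insert] at hU₁ hU₂
          rcases hU₁ with rfl | hU₁ <;> rcases hU₂ with rfl | hU₂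
          · exact absurd rfl hne12
          · obtain ⟨h1, h2⟩ := Finset.mem_sdiff.mp hU₂
            exact hWdisj U₂ h1 h2
          · obtain ⟨h1, h2⟩ := Finset.mem_sdiff.mp hU₁
            rw [Finset.inter_comm]
            exact hWdisj U₁ h1 h2
          · exact hQdisj U₁ (Finset.mem_sdiff.mp hU₁).1 U₂ (Finset.mem_sdiff.mp hU₂).1 hne12
        · apply Finset.Subset.antisymm
          · show Q'.sup id ≤ S
            apply Finset.sup_le
            intro U hU
            rw [hQ', Finset.mem_insert] at hU
            rcases hU with rfl | hU
            · exact hWS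
            · exact hQsup ▸ Finset.le_sup (f := id) (Finset.mem_sdiff.mp hU).1
          · intro y hy
            rw [← hQsup, Finset.mem_sup] at hy
            obtain ⟨U, hUQ, hyU⟩ := hy
            rw [Finset.mem_sup]
            by_cases hUF : U ∈ F
            · refine ⟨W, Finset.mem_insert_self _ _, ?_⟩
              show y ∈ T' ∪ F.sup id
              rw [Finset.mem_union, Finset.mem_sup]
              exact Or.inr ⟨U, hUF, hyU⟩
            · exact ⟨U, Finset.mem_insert_of_mem (Finset.mem_sdiff.mpr ⟨hUQ, hUF⟩), hyU⟩
      -- F has at least two elements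
      have hTF : T ∈ F := by
        rw [hF, Finset.mem_filter]
        refine ⟨hTQ, ?_⟩
        obtain ⟨y, hy⟩ := h0.1 T (hQB T hTQ)
        exact ⟨y, Finset.mem_inter.mpr ⟨hy, hTT' hy⟩⟩
      obtain ⟨z, hzT', hzT⟩ : ∃ z, z ∈ T' ∧ z ∉ T := by
        by_contra h
        push_neg at h
        exact hne (Finset.Subset.antisymm hTT' h)
      obtain ⟨U, hUQ, hzU⟩ : ∃ U ∈ Q, z ∈ U := by
        have : z ∈ Q.sup id := hQsup ▸ hT'S hzT'
        rw [Finset.mem_sup] at this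
        exact this
      have hUF : U ∈ F := by
        rw [hF, Finset.mem_filter]
        exact ⟨hUQ, ⟨z, Finset.mem_inter.mpr ⟨hzU, hzT'⟩⟩⟩
      have hUT : U ≠ T := fun h => hzT (h ▸ hzU)
      have hF2 : 2 ≤ F.card := Finset.one_lt_card.mpr ⟨U, hUF, T, hTF, hUT⟩
      have hFQcard : F.card ≤ Q.card := Finset.card_le_card hFQ
      have hsd : (Q \ F).card = Q.card - F.card := Finset.card_sdiff_of_subset hFQ
      have hQ'card : Q'.card ≤ (Q \ F).card + 1 := Finset.card_insert_le _ _
      have : Q.card ≤ Q'.card := hmin Q' hQ'dec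
      omega
    -- now Q ⊆ M and M ⊆ Q
    ext T
    simp only [Finset.coe_mem, Set.mem_setOf_eq, Finset.mem_coe]
    constructor
    · exact hQM T
    · rintro ⟨hTB, hTS, hTmax⟩
      obtain ⟨y, hyT⟩ := h0.1 T hTB
      have hyS : y ∈ S := hTS hyT
      obtain ⟨U, hUQ, hyU⟩ : ∃ U ∈ Q, y ∈ U := by
        have : y ∈ Q.sup id := hQsup ▸ hyS
        rw [Finset.mem_sup] at this
        exact this
      have hUM := hQM U hUQ
      by_cases h : U = T
      · exact h ▸ hUQ
      · exfalso
        have := part1 U hUM T ⟨hTB, hTS, hTmax⟩ h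
        have hmem : y ∈ U ∩ T := Finset.mem_inter.mpr ⟨hyU, hyT⟩
        rw [‹U ∩ T = ∅›] at hmem
        exact absurd hmem (Finset.notMem_empty y)
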